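/- Let H be a complex Hilbert space and T : H → H an additive bijection that commutes with every bounded linear operator on H (TX = XT for all X ∈ B(H)). Then T = λ·id for some nonzero complex scalar λ. -/

import Mathlib

theorem stmt_15 {H : Type*} [NormedAddCommGroup H] [InnerProductSpace ℂ H] [CompleteSpace H]
    (T : H → H) (hadd : ∀ x y : H, T (x + y) = T x + T y)
    (hbij : Function.Bijective T)
    (hcomm : ∀ X : H →L[ℂ] H, ∀ v : H, T (X v) = X (T v)) :
    ∃ l : ℂ, l ≠ 0 ∧ ∀ v : H, T v = l • v := by
  have hT0 : T 0 = 0 := by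
    have := hadd 0 0
    simp at this
    linear_combination (norm := abel_nf) this
  rcases subsingleton_or_nontrivial H with hsub | hnt
  · exact ⟨1, one_ne_zero, fun v => Subsingleton.elim _ _⟩
  · obtain ⟨e, he⟩ := exists_ne (0 : H)
    have hee : (inner ℂ e e : ℂ) ≠ 0 := by
      simpa [inner_self_eq_zero] using he
    set l : ℂ := (inner ℂ e e : ℂ)⁻¹ * inner ℂ e (T e) with hl
    have key : ∀ w : H, T w = l • w := by
      intro w
      have h := hcomm (((inner ℂ e e : ℂ)⁻¹ • (innerSL ℂ e)).smulRight w) e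
      simpa [ContinuousLinearMap.smulRight_apply, smul_smul,
        inv_mul_cancel₀ hee, hl, he] using h
    refine ⟨l, ?_, key⟩
    intro hl0
    apply he
    apply hbij.injective
    rw [key e, hl0, hT0, zero_smul]
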